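/- Let η(g, h, α, β) = ∫_{u ∈ Sym_n(ℝ), u > h, u > -h} e^{-tr(ug)} det(u+h)^{α-ρ_n} det(u-h)^{β-ρ_n} du with ρ_n = (n+1)/2, defined for positive definite g and invertible symmetric h, with Re(α), Re(β) > ρ_n - 1. Then for every S ∈ GL_n(ℝ), η(Sᵀ g S, h, α, β) = |det S|^{2(ρ_n - α - β)} · η(g, S h Sᵀ, α, β). -/

import Mathlib

open MeasureTheory Matrix

/-- Index set for the independent entries of a symmetric `n × n` matrix. -/
abbrev SymIdx (n : ℕ) := {p : Fin n × Fin n // p.1 ≤ p.2}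

/-- The symmetric matrix determined by its upper triangular entries. -/
def toSym {n : ℕ} (x : SymIdx n → ℝ) : Matrix (Fin n) (Fin n) ℝ :=
  Matrix.of fun i j => if h : i ≤ j then x ⟨(i, j), h⟩ else x ⟨(j, i), le_of_not_ge h⟩

namespace EtaAux
variable {n : ℕ}

lemma toSym_apply (x : SymIdx n → ℝ) (p : SymIdx n) : toSym x p.1.1 p.1.2 = x p := by
  have h := p.2
  simp only [toSym, Matrix.of_apply, dif_pos h]

lemma toSym_transpose (x : SymIdx n → ℝ) : (toSym x)ᵀ = toSym x := by
  ext i j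
  simp only [Matrix.transpose_apply, toSym, Matrix.of_apply]
  rcases le_or_gt i j with h | h
  · rcases eq_or_lt_of_le h with rfl | h'
    · simp
    · rw [dif_pos h, dif_neg (not_le.2 h')]
  · rw [dif_pos h.le, dif_neg (not_le.2 h)]

def ofSym (u : Matrix (Fin n) (Fin n) ℝ) : SymIdx n → ℝ := fun p => u p.1.1 p.1.2

lemma toSym_ofSym {u : Matrix (Fin n) (Fin n) ℝ} (hu : uᵀ = u) : toSym (ofSym u) = u := by
  ext i j
  simp only [toSym, ofSym, Matrix.of_apply]
  split
  · rfl
  · exact congrFun (congrFun hu j) i ▸ rfl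

/-- The linear map on coordinates corresponding to `u ↦ S * u * Sᵀ`. -/
def Tl (S : Matrix (Fin n) (Fin n) ℝ) : (SymIdx n → ℝ) →ₗ[ℝ] (SymIdx n → ℝ) where
  toFun x := ofSym (S * toSym x * Sᵀ)
  map_add' x y := by
    funext p
    have : toSym (x + y) = toSym x + toSym y := by
      ext i j; simp only [toSym, Matrix.of_apply, Pi.add_apply, Matrix.add_apply]; split <;> rfl
    simp [ofSym, this, Matrix.mul_add, Matrix.add_mul]
  map_smul' c x := by
    funext p
    have : toSym (c • x) = c • toSym x := by
      ext i j; simp only [toSym, Matrix.of_apply, Pi.smul_apply, Matrix.smul_apply]; split <;> rfl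
    simp [ofSym, this, Matrix.mul_smul, Matrix.smul_mul]

lemma toSym_Tl (S : Matrix (Fin n) (Fin n) ℝ) (x : SymIdx n → ℝ) :
    toSym (Tl S x) = S * toSym x * Sᵀ := by
  show toSym (ofSym (S * toSym x * Sᵀ)) = S * toSym x * Sᵀ
  apply toSym_ofSym
  rw [Matrix.transpose_mul, Matrix.transpose_mul, Matrix.transpose_transpose, toSym_transpose,
    Matrix.mul_assoc]

lemma Tl_mul (M N : Matrix (Fin n) (Fin n) ℝ) : Tl (M * N) = (Tl M).comp (Tl N) := by
  refine LinearMap.ext fun x => ?_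
  show ofSym (M * N * toSym x * (M * N)ᵀ) = ofSym (M * toSym (Tl N x) * Mᵀ)
  rw [toSym_Tl, Matrix.transpose_mul]
  noncomm_ring

lemma Tl_one : Tl (1 : Matrix (Fin n) (Fin n) ℝ) = LinearMap.id := by
  refine LinearMap.ext fun x => ?_
  show ofSym (1 * toSym x * (1:Matrix (Fin n) (Fin n) ℝ)ᵀ) = x
  funext p
  simp [ofSym, toSym_apply]

end EtaAux

namespace EtaAux
variable {n : ℕ}

lemma toSym_single (q : SymIdx n) (i j : Fin n) :
    toSym (Pi.single q (1:ℝ)) i j = if (i, j) = q.1 ∨ (j, i) = q.1 then 1 else 0 := by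
  obtain ⟨⟨k, l⟩, hkl⟩ := q
  simp only [toSym, Matrix.of_apply]
  split
  · next h =>
    rw [Pi.single_apply]
    congr 1
    simp only [eq_iff_iff, Subtype.ext_iff, Prod.mk.injEq]
    constructor
    · rintro ⟨h1, h2⟩; exact Or.inl ⟨h1, h2⟩
    · rintro (⟨h1, h2⟩ | ⟨h1, h2⟩)
      · exact ⟨h1, h2⟩
      · have h' : i ≤ k := h1 ▸ h
        have h'' : k ≤ i := h2 ▸ hkl
        have hik := le_antisymm h' h''
        exact ⟨hik, h1.trans (hik.symm.trans h2)⟩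
  · next h =>
    rw [Pi.single_apply]
    congr 1
    simp only [eq_iff_iff, Subtype.ext_iff, Prod.mk.injEq]
    constructor
    · rintro ⟨h1, h2⟩; exact Or.inr ⟨h1, h2⟩
    · rintro (⟨h1, h2⟩ | ⟨h1, h2⟩)
      · exact absurd (h2 ▸ h1 ▸ hkl : i ≤ j) h
      · exact ⟨h1, h2⟩

lemma toSym_single_rep (q : SymIdx n) :
    toSym (Pi.single q (1:ℝ)) =
      Matrix.single q.1.1 q.1.2 1 +
        if q.1.1 = q.1.2 then 0 else Matrix.single q.1.2 q.1.1 1 := by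
  obtain ⟨⟨k, l⟩, hkl⟩ := q
  ext i j
  rw [toSym_single]
  by_cases hk : k = l
  · subst hk
    simp only [if_pos rfl, add_zero, Matrix.single, Matrix.of_apply, Matrix.add_apply,
      Prod.mk.injEq]
    by_cases h1 : i = k <;> by_cases h2 : j = k <;> simp_all [eq_comm]
  · simp only [if_neg hk, Matrix.single, Matrix.of_apply, Matrix.add_apply, Prod.mk.injEq]
    by_cases h1 : i = k <;> by_cases h2 : j = l <;> by_cases h3 : i = l <;> by_cases h4 : j = k <;>
      simp_all [eq_comm]

lemma mul_std_mul (S : Matrix (Fin n) (Fin n) ℝ) (k l i j : Fin n) :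
    (S * Matrix.single k l (1:ℝ) * Sᵀ) i j = S i k * S j l := by
  rw [Matrix.mul_assoc, Matrix.mul_apply]
  simp only [Matrix.mul_apply, Matrix.single, Matrix.of_apply, ite_and, ite_mul, mul_ite,
    one_mul, zero_mul, mul_one, mul_zero, Finset.sum_ite_irrel, Finset.sum_const_zero,
    Finset.sum_ite_eq, Finset.mem_univ, if_true, Matrix.transpose_apply]

lemma Tl_single (S : Matrix (Fin n) (Fin n) ℝ) (q p : SymIdx n) :
    Tl S (Pi.single q (1:ℝ)) p =
      S p.1.1 q.1.1 * S p.1.2 q.1.2 +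
        if q.1.1 = q.1.2 then 0 else S p.1.1 q.1.2 * S p.1.2 q.1.1 := by
  show (S * toSym (Pi.single q 1) * Sᵀ) p.1.1 p.1.2 = _
  rw [toSym_single_rep]
  by_cases hq : q.1.1 = q.1.2
  · rw [if_pos hq, if_pos hq, add_zero, add_zero, mul_std_mul]
  · rw [if_neg hq, if_neg hq, Matrix.mul_add, Matrix.add_mul, Matrix.add_apply,
      mul_std_mul, mul_std_mul]

end EtaAux

namespace EtaAux
variable {n : ℕ}

lemma prod_sym (d : Fin n → ℝ) :
    ∏ p : SymIdx n, (d p.1.1 * d p.1.2) = (∏ i, d i) ^ (n + 1) := by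
  classical
  set s : Finset (Fin n × Fin n) := Finset.univ.filter (fun p => p.1 ≤ p.2) with hs
  set t : Finset (Fin n × Fin n) := Finset.univ.filter (fun p => p.2 ≤ p.1) with ht
  have hsub : ∀ f : Fin n × Fin n → ℝ, ∏ p : SymIdx n, f p.1 = ∏ p ∈ s, f p := by
    intro f
    rw [Finset.prod_subtype (p := fun p : Fin n × Fin n => p.1 ≤ p.2) s (by intro x; simp [hs]) f]
  rw [hsub (fun p => d p.1 * d p.2), Finset.prod_mul_distrib]
  have hswap : ∏ p ∈ s, d p.2 = ∏ p ∈ t, d p.1 := by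
    apply Finset.prod_nbij' (fun p => Prod.swap p) (fun p => Prod.swap p) <;>
      simp [hs, ht]
  rw [hswap]
  have hunion : s ∪ t = Finset.univ := by
    ext p; simp [hs, ht, le_total]
  have hinter : s ∩ t = Finset.univ.filter (fun p : Fin n × Fin n => p.1 = p.2) := by
    ext p
    simp only [Finset.mem_inter, Finset.mem_filter, Finset.mem_univ, true_and, hs, ht]
    exact ⟨fun ⟨h1, h2⟩ => le_antisymm h1 h2, fun h => ⟨le_of_eq h, ge_of_eq h⟩⟩
  have key : ((∏ x ∈ s ∪ t, d x.1) * ∏ x ∈ s ∩ t, d x.1) =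
      (∏ x ∈ s, d x.1) * ∏ x ∈ t, d x.1 := Finset.prod_union_inter
  rw [hunion, hinter] at key
  rw [← key]
  have h1 : ∏ p : Fin n × Fin n, d p.1 = (∏ i, d i) ^ n := by
    rw [← Finset.univ_product_univ, Finset.prod_product]
    simp [Finset.prod_pow]
  have h2 : ∏ p ∈ Finset.univ.filter (fun p : Fin n × Fin n => p.1 = p.2), d p.1 = ∏ i, d i := by
    apply Finset.prod_nbij' (fun p => p.1) (fun i => (i, i)) <;> simp
  rw [h1, h2, pow_succ]

lemma det_Tl_diagonal (d : Fin n → ℝ) :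
    LinearMap.det (Tl (Matrix.diagonal d)) = (Matrix.diagonal d).det ^ (n + 1) := by
  classical
  rw [← LinearMap.det_toMatrix']
  have hrep : LinearMap.toMatrix' (Tl (Matrix.diagonal d)) =
      Matrix.diagonal (fun p : SymIdx n => d p.1.1 * d p.1.2) := by
    ext p q
    rw [LinearMap.toMatrix'_apply]
    have hsingle : (fun j' : SymIdx n => if j' = q then (1:ℝ) else 0) = Pi.single q 1 := by
      funext r; rw [Pi.single_apply]
    rw [Tl_single]
    by_cases hpq : p = q
    · subst hpq
      rw [Matrix.diagonal_apply_eq, Matrix.diagonal_apply_eq, Matrix.diagonal_apply_eq]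
      split
      · rw [add_zero]
      · next hne =>
        rw [Matrix.diagonal_apply_ne _ hne, zero_mul, add_zero]
    · rw [Matrix.diagonal_apply_ne _ hpq]
      obtain ⟨⟨k, l⟩, hkl⟩ := q
      obtain ⟨⟨i, j⟩, hij⟩ := p
      have hne : ¬(i = k ∧ j = l) := by
        intro ⟨h1, h2⟩; exact hpq (Subtype.ext (Prod.ext h1 h2))
      by_cases h1 : i = k
      · have h2 : j ≠ l := fun h => hne ⟨h1, h⟩
        rw [Matrix.diagonal_apply_ne _ h2, mul_zero, zero_add]
        split
        · rfl
        · next hkl' =>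
          by_cases h3 : i = l
          · exact absurd (h1 ▸ h3 : k = l) (by simpa using hkl')
          · rw [Matrix.diagonal_apply_ne _ h3, zero_mul]
      · rw [Matrix.diagonal_apply_ne _ h1, zero_mul, zero_add]
        split
        · rfl
        · next hkl' =>
          by_cases h3 : i = l
          · by_cases h4 : j = k
            · -- i ≤ j, k ≤ l, i = l, j = k : then k ≤ l = i ≤ j = k, so all equal
              exfalso
              apply h1
              have : k ≤ i := h3 ▸ hkl
              have : i ≤ k := h4 ▸ hij
              exact le_antisymm this (h3 ▸ hkl)
            · rw [Matrix.diagonal_apply_ne _ h4, mul_zero]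
          · rw [Matrix.diagonal_apply_ne _ h3, zero_mul]
  rw [hrep, Matrix.det_diagonal, Matrix.det_diagonal, prod_sym]

end EtaAux

namespace EtaAux
variable {n : ℕ}

/-- weight: number of occurrences of `a` in the index pair -/
def wt (a : Fin n) (x : Fin n) : ℕ := if x = a then 1 else 0

lemma transvection_entry_support {a b : Fin n} (hab : a ≠ b) (c : ℝ) {i j : Fin n}
    (h : Matrix.transvection a b c i j ≠ 0) : i = j ∨ (i = a ∧ j = b) := by
  by_contra hcon
  push_neg at hcon
  apply h
  simp only [Matrix.transvection, Matrix.add_apply, Matrix.one_apply, Matrix.single,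
    Matrix.of_apply]
  rw [if_neg hcon.1, if_neg, add_zero]
  intro ⟨h1, h2⟩
  exact hcon.2 h1.symm h2.symm

lemma transvection_diag {a b : Fin n} (hab : a ≠ b) (c : ℝ) (i : Fin n) :
    Matrix.transvection a b c i i = 1 := by
  simp only [Matrix.transvection, Matrix.add_apply, Matrix.one_apply_eq, Matrix.single,
    Matrix.of_apply]
  rw [if_neg, add_zero]
  intro ⟨h1, h2⟩
  exact hab (h1 ▸ h2 ▸ rfl)

lemma wlem {a b : Fin n} (hab : a ≠ b) {i j k l : Fin n}
    (hik : i = k ∨ (i = a ∧ k = b)) (hjl : j = l ∨ (j = a ∧ l = b))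
    (hne : ¬(i = k ∧ j = l)) : wt a k + wt a l < wt a i + wt a j := by
  have h1 : wt a b = 0 := by simp [wt, Ne.symm hab]
  have h2 : wt a a = 1 := by simp [wt]
  rcases hik with rfl | ⟨rfl, rfl⟩ <;> rcases hjl with rfl | ⟨rfl, rfl⟩
  · exact absurd ⟨rfl, rfl⟩ hne
  · rw [h1, h2]; omega
  · rw [h1, h2]; omega
  · rw [h1, h2]; omega

lemma det_Tl_transvection {a b : Fin n} (hab : a ≠ b) (c : ℝ) :
    LinearMap.det (Tl (Matrix.transvection a b c)) = 1 := by
  classical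
  rw [← LinearMap.det_toMatrix']
  set M := LinearMap.toMatrix' (Tl (Matrix.transvection a b c)) with hM
  set S := Matrix.transvection a b c with hSdef
  set w : SymIdx n → ℕ := fun p => wt a p.1.1 + wt a p.1.2 with hw
  have hMapply : ∀ p q : SymIdx n, M p q =
      S p.1.1 q.1.1 * S p.1.2 q.1.2 +
        if q.1.1 = q.1.2 then 0 else S p.1.1 q.1.2 * S p.1.2 q.1.1 := by
    intro p q
    rw [hM, LinearMap.toMatrix'_apply]
    have hsingle : (fun j' : SymIdx n => if j' = q then (1:ℝ) else 0) = Pi.single q 1 := by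
      funext r; rw [Pi.single_apply]
    rw [Tl_single]
  have key : ∀ p q : SymIdx n, p ≠ q → w p ≤ w q → M p q = 0 := by
    intro p q hpq hwle
    rw [hMapply]
    obtain ⟨⟨i, j⟩, hij⟩ := p
    obtain ⟨⟨k, l⟩, hkl⟩ := q
    simp only at hwle ⊢
    have term1 : S i k * S j l = 0 := by
      by_contra h
      have h1 := transvection_entry_support hab c (left_ne_zero_of_mul h)
      have h2 := transvection_entry_support hab c (right_ne_zero_of_mul h)
      have hne : ¬(i = k ∧ j = l) := by
        intro ⟨e1, e2⟩; exact hpq (Subtype.ext (Prod.ext e1 e2))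
      have := wlem hab h1 h2 hne
      simp only [hw] at hwle
      omega
    rw [term1, zero_add]
    split
    · rfl
    · next hkl' =>
      by_contra h
      have h1 := transvection_entry_support hab c (left_ne_zero_of_mul h)
      have h2 := transvection_entry_support hab c (right_ne_zero_of_mul h)
      have hne : ¬(i = l ∧ j = k) := by
        intro ⟨e1, e2⟩
        have h5 : l ≤ k := by rw [← e1, ← e2]; exact hij
        exact hkl' (le_antisymm hkl h5)
      have := wlem hab h1 h2 hne
      simp only [hw] at hwle
      omega
  have diag : ∀ p : SymIdx n, M p p = 1 := by
    intro p
    rw [hMapply]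
    obtain ⟨⟨i, j⟩, hij⟩ := p
    simp only
    rw [hSdef]
    rw [transvection_diag hab, transvection_diag hab, one_mul]
    split
    · rw [add_zero]
    · next hne =>
      have : Matrix.transvection a b c i j * Matrix.transvection a b c j i = 0 := by
        by_contra h
        have h1 := transvection_entry_support hab c (left_ne_zero_of_mul h)
        have h2 := transvection_entry_support hab c (right_ne_zero_of_mul h)
        rcases h1 with rfl | ⟨rfl, rfl⟩
        · exact hne rfl
        · rcases h2 with e | ⟨e1, e2⟩
          · exact hne e.symm
          · exact hab (e1 ▸ e2 ▸ rfl)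
      rw [this, add_zero]
  have hBT : Matrix.BlockTriangular M (fun p => -(w p : ℤ)) := by
    intro p q hlt
    simp only [neg_lt_neg_iff, Int.ofNat_lt] at hlt
    have hlt' : w p < w q := by exact_mod_cast hlt
    exact key p q (fun h => by rw [h] at hlt'; exact lt_irrefl _ hlt') hlt'.le
  rw [hBT.det]
  apply Finset.prod_eq_one
  intro v _
  have : M.toSquareBlock (fun p => -(w p : ℤ)) v = 1 := by
    ext ⟨p, hp⟩ ⟨q, hq⟩
    by_cases hpq : p = q
    · subst hpq
      have h1 : M.toSquareBlock (fun p => -(w p : ℤ)) v ⟨p, hp⟩ ⟨p, hq⟩ = M p p := rfl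
      rw [h1, diag, Matrix.one_apply_eq]
    · have h1 : M.toSquareBlock (fun p => -(w p : ℤ)) v ⟨p, hp⟩ ⟨q, hq⟩ = M p q := rfl
      have hwpq : w p ≤ w q := by omega
      rw [h1, key p q hpq hwpq, Matrix.one_apply_ne]
      exact fun h => hpq (congrArg Subtype.val h)
  rw [this, Matrix.det_one]

end EtaAux

namespace EtaAux
variable {n : ℕ}

lemma det_Tl (S : Matrix (Fin n) (Fin n) ℝ) (hS : S.det ≠ 0) :
    LinearMap.det (Tl S) = S.det ^ (n + 1) := by
  apply Matrix.diagonal_transvection_induction_of_det_ne_zero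
    (P := fun A => LinearMap.det (Tl A) = A.det ^ (n + 1)) S hS
  · intro D _
    exact det_Tl_diagonal D
  · intro t
    rw [show t.toMatrix = Matrix.transvection t.i t.j t.c from rfl,
      det_Tl_transvection t.hij t.c, Matrix.det_transvection_of_ne _ _ t.hij, one_pow]
  · intro A B _ _ PA PB
    rw [Tl_mul, LinearMap.det_comp, PA, PB, Matrix.det_mul, mul_pow]

end EtaAux

namespace EtaAux
variable {n : ℕ}

lemma isHermitian_of_isSymm {A : Matrix (Fin n) (Fin n) ℝ} (hA : A.IsSymm) : A.IsHermitian := by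
  show Aᴴ = A
  ext i j
  rw [Matrix.conjTranspose_apply, star_trivial]
  exact congrFun (congrFun hA i) j

lemma posDef_conj_of {S M : Matrix (Fin n) (Fin n) ℝ} (hS : S.det ≠ 0) (hM : M.PosDef) :
    (S * M * Sᵀ).PosDef := by
  refine Matrix.posDef_iff_dotProduct_mulVec.mpr ⟨?_, ?_⟩
  · have : (Sᵀ)ᴴ = Sᴴᵀ := rfl
    have h1 : (S * M * Sᴴ).IsHermitian := Matrix.isHermitian_mul_mul_conjTranspose S hM.1
    have h2 : Sᴴ = Sᵀ := by
      ext i j; rw [Matrix.conjTranspose_apply, star_trivial, Matrix.transpose_apply]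
    rwa [h2] at h1
  · intro x hx
    have hy : Sᵀ *ᵥ x ≠ 0 := by
      intro hy0
      apply hx
      have : (Sᵀ)⁻¹ *ᵥ (Sᵀ *ᵥ x) = 0 := by rw [hy0, Matrix.mulVec_zero]
      rwa [Matrix.mulVec_mulVec, Matrix.nonsing_inv_mul _
          (by rw [Matrix.det_transpose]; exact isUnit_iff_ne_zero.mpr hS),
        Matrix.one_mulVec] at this
    have key : star x ⬝ᵥ ((S * M * Sᵀ) *ᵥ x) = star (Sᵀ *ᵥ x) ⬝ᵥ (M *ᵥ (Sᵀ *ᵥ x)) := by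
      have hsx : star x = x := by funext i; exact star_trivial _
      have hsy : star (Sᵀ *ᵥ x) = Sᵀ *ᵥ x := by funext i; exact star_trivial _
      rw [hsx, hsy]
      rw [← Matrix.mulVec_mulVec, ← Matrix.mulVec_mulVec, Matrix.dotProduct_mulVec x S,
        ← Matrix.mulVec_transpose]
    rw [key]
    exact hM.dotProduct_mulVec_pos hy

lemma posDef_conj_iff {S M : Matrix (Fin n) (Fin n) ℝ} (hS : S.det ≠ 0) :
    (S * M * Sᵀ).PosDef ↔ M.PosDef := by
  constructor
  · intro hp
    have hS' : (S⁻¹).det ≠ 0 := by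
      rw [Matrix.det_nonsing_inv, Ring.inverse_eq_inv]
      exact inv_ne_zero hS
    have := posDef_conj_of hS' hp
    have heq : S⁻¹ * (S * M * Sᵀ) * (S⁻¹)ᵀ = M := by
      rw [Matrix.transpose_nonsing_inv]
      calc S⁻¹ * (S * M * Sᵀ) * (Sᵀ)⁻¹
          = (S⁻¹ * S) * M * (Sᵀ * (Sᵀ)⁻¹) := by noncomm_ring
        _ = M := by
            rw [Matrix.nonsing_inv_mul _ (by simpa using hS),
              Matrix.mul_nonsing_inv _ (by simpa using hS), one_mul, mul_one]
    rwa [heq] at this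
  · exact posDef_conj_of hS

lemma posDef_of_posSemidef_det_ne_zero {A : Matrix (Fin n) (Fin n) ℝ}
    (h1 : A.PosSemidef) (h2 : A.det ≠ 0) : A.PosDef := by
  refine Matrix.posDef_iff_dotProduct_mulVec.mpr ⟨h1.1, fun x hx => ?_⟩
  rcases lt_or_eq_of_le (h1.dotProduct_mulVec_nonneg x) with h | h
  · exact h
  · exfalso
    have h3 : A *ᵥ x = 0 := (h1.dotProduct_mulVec_zero_iff x).1 h.symm
    exact h2 (Matrix.exists_mulVec_eq_zero_iff.1 ⟨x, hx, h3⟩)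

lemma continuous_toSym : Continuous (toSym (n := n)) := by
  apply continuous_matrix
  intro i j
  simp only [toSym, Matrix.of_apply]
  split
  · exact continuous_apply _
  · exact continuous_apply _

lemma measurableSet_posDef (c : Matrix (Fin n) (Fin n) ℝ) (hc : c.IsSymm) :
    MeasurableSet {x : SymIdx n → ℝ | (toSym x + c).PosDef} := by
  have hherm : ∀ x : SymIdx n → ℝ, (toSym x + c).IsHermitian := by
    intro x
    apply isHermitian_of_isSymm
    show (toSym x + c)ᵀ = _
    rw [Matrix.transpose_add, toSym_transpose, hc]
  have hcont : Continuous fun x : SymIdx n → ℝ => toSym x + c :=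
    continuous_toSym.add continuous_const
  have key : {x : SymIdx n → ℝ | (toSym x + c).PosDef} =
      (⋂ v : Fin n → ℝ, {x | 0 ≤ v ⬝ᵥ ((toSym x + c) *ᵥ v)}) ∩
        {x | (toSym x + c).det ≠ 0} := by
    ext x
    simp only [Set.mem_inter_iff, Set.mem_iInter, Set.mem_setOf_eq]
    constructor
    · intro hx
      refine ⟨fun v => ?_, ne_of_gt hx.det_pos⟩
      have := hx.posSemidef.dotProduct_mulVec_nonneg v
      have hsv : star v = v := by funext i; exact star_trivial _
      rwa [hsv] at this
    · intro ⟨h1, h2⟩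
      apply posDef_of_posSemidef_det_ne_zero _ h2
      refine Matrix.PosSemidef.of_dotProduct_mulVec_nonneg (hherm x) fun v => ?_
      have hsv : star v = v := by funext i; exact star_trivial _
      rw [hsv]
      exact h1 v
  rw [key]
  apply MeasurableSet.inter
  · apply IsClosed.measurableSet
    apply isClosed_iInter
    intro v
    apply isClosed_le continuous_const
    exact (continuous_const.dotProduct (hcont.matrix_mulVec continuous_const))
  · exact hcont.matrix_det.measurable (measurableSet_singleton 0).compl

end EtaAux

namespace EtaAux
variable {n : ℕ}

lemma measurableSet_domain (h : Matrix (Fin n) (Fin n) ℝ) (hh : h.IsSymm) :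
    MeasurableSet {x : SymIdx n → ℝ | (toSym x - h).PosDef ∧ (toSym x + h).PosDef} := by
  have h1 := measurableSet_posDef (-h) (by show (-h)ᵀ = -h; rw [Matrix.transpose_neg, hh])
  have h2 := measurableSet_posDef h hh
  have key : {x : SymIdx n → ℝ | (toSym x - h).PosDef ∧ (toSym x + h).PosDef} =
      {x : SymIdx n → ℝ | (toSym x + (-h)).PosDef} ∩ {x : SymIdx n → ℝ | (toSym x + h).PosDef} := by
    ext x
    simp [sub_eq_add_neg]
  rw [key]
  exact h1.inter h2

lemma ofReal_pos_eq_exp (x : ℝ) (hx : 0 < x) : (x : ℂ) = Complex.exp ((Real.log x : ℂ)) := by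
  rw [← Complex.ofReal_exp, Real.exp_log hx]

lemma cpow_pos_eq_exp (x : ℝ) (hx : 0 < x) (c : ℂ) :
    (x : ℂ) ^ c = Complex.exp ((Real.log x : ℂ) * c) := by
  rw [Complex.cpow_def_of_ne_zero (by exact_mod_cast hx.ne' : (x:ℂ) ≠ 0),
    Complex.ofReal_log hx.le]

end EtaAux

/-- Shimura's confluent hypergeometric function of matrix argument,
`η(g,h,α,β) = ∫_{u > ±h} e^{-tr(ug)} det(u+h)^{α-ρ_n} det(u-h)^{β-ρ_n} du`
with `ρ_n = (n+1)/2`. -/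
noncomputable def etaN (n : ℕ) (g h : Matrix (Fin n) (Fin n) ℝ) (α β : ℂ) : ℂ :=
  ∫ x in {x : SymIdx n → ℝ | (toSym x - h).PosDef ∧ (toSym x + h).PosDef},
    Complex.exp (-(((toSym x * g).trace : ℝ) : ℂ)) *
      (((toSym x + h).det : ℝ) : ℂ) ^ (α - ((n : ℂ) + 1) / 2) *
      (((toSym x - h).det : ℝ) : ℂ) ^ (β - ((n : ℂ) + 1) / 2)

/-- transformation law
`η(Sᵀ g S, h, α, β) = |det S|^{2(ρ_n - α - β)} η(g, S h Sᵀ, α, β)` for `S ∈ GL_n(ℝ)`. -/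
theorem etaN_transform (n : ℕ) (g h : Matrix (Fin n) (Fin n) ℝ)
    (hg : g.PosDef) (hh : h.IsSymm) (hhdet : IsUnit h.det) (α β : ℂ)
    (hα : ((n : ℝ) + 1) / 2 - 1 < α.re) (hβ : ((n : ℝ) + 1) / 2 - 1 < β.re)
    (S : Matrix (Fin n) (Fin n) ℝ) (hS : IsUnit S.det) :
    etaN n (Sᵀ * g * S) h α β =
      ((|S.det| : ℝ) : ℂ) ^ (2 * (((n : ℂ) + 1) / 2 - α - β)) *
        etaN n g (S * h * Sᵀ) α β := by
  classical
  have hdet : S.det ≠ 0 := hS.ne_zero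
  have hdetinv : (S⁻¹).det ≠ 0 := by
    rw [Matrix.det_nonsing_inv, Ring.inverse_eq_inv]
    exact inv_ne_zero hdet
  have hSS : S * S⁻¹ = 1 := Matrix.mul_nonsing_inv S (by simpa using hS)
  have hS'S : S⁻¹ * S = 1 := Matrix.nonsing_inv_mul S (by simpa using hS)
  have hTp : Sᵀ * (S⁻¹)ᵀ = 1 := by rw [← Matrix.transpose_mul, hS'S, Matrix.transpose_one]
  have hTp' : (S⁻¹)ᵀ * Sᵀ = 1 := by rw [← Matrix.transpose_mul, hSS, Matrix.transpose_one]
  set h' : Matrix (Fin n) (Fin n) ℝ := S * h * Sᵀ with hh'def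
  have hh' : h'.IsSymm := by
    show h'ᵀ = h'
    rw [hh'def, Matrix.transpose_mul, Matrix.transpose_mul, Matrix.transpose_transpose, hh,
      Matrix.mul_assoc]
  have hconjadd : ∀ u : Matrix (Fin n) (Fin n) ℝ,
      S⁻¹ * u * (S⁻¹)ᵀ + h = S⁻¹ * (u + h') * (S⁻¹)ᵀ := by
    intro u
    have hmid : S⁻¹ * h' * (S⁻¹)ᵀ = h := by
      calc S⁻¹ * (S * h * Sᵀ) * (S⁻¹)ᵀ = S⁻¹ * S * h * (Sᵀ * (S⁻¹)ᵀ) := by noncomm_ring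
        _ = h := by rw [hS'S, hTp, one_mul, mul_one]
    rw [Matrix.mul_add, Matrix.add_mul, hmid]
  have hconjsub : ∀ u : Matrix (Fin n) (Fin n) ℝ,
      S⁻¹ * u * (S⁻¹)ᵀ - h = S⁻¹ * (u - h') * (S⁻¹)ᵀ := by
    intro u
    have hmid : S⁻¹ * h' * (S⁻¹)ᵀ = h := by
      calc S⁻¹ * (S * h * Sᵀ) * (S⁻¹)ᵀ = S⁻¹ * S * h * (Sᵀ * (S⁻¹)ᵀ) := by noncomm_ring
        _ = h := by rw [hS'S, hTp, one_mul, mul_one]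
    rw [Matrix.mul_sub, Matrix.sub_mul, hmid]
  -- the substitution map
  set T : (SymIdx n → ℝ) →ₗ[ℝ] (SymIdx n → ℝ) := EtaAux.Tl S⁻¹ with hTdef
  have hTdet : LinearMap.det T = (S⁻¹).det ^ (n + 1) := EtaAux.det_Tl _ hdetinv
  have hTdet0 : LinearMap.det T ≠ 0 := by rw [hTdet]; exact pow_ne_zero _ hdetinv
  have hcomp1 : T.comp (EtaAux.Tl S) = LinearMap.id := by
    rw [hTdef, ← EtaAux.Tl_mul, hS'S, EtaAux.Tl_one]
  have hcomp2 : (EtaAux.Tl S).comp T = LinearMap.id := by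
    rw [hTdef, ← EtaAux.Tl_mul, hSS, EtaAux.Tl_one]
  set eL : (SymIdx n → ℝ) ≃ₗ[ℝ] (SymIdx n → ℝ) :=
    LinearEquiv.ofLinear T (EtaAux.Tl S) hcomp1 hcomp2 with heL
  set em : (SymIdx n → ℝ) ≃ᵐ (SymIdx n → ℝ) :=
    eL.toContinuousLinearEquiv.toHomeomorph.toMeasurableEquiv with hem
  have hemT : ∀ y, em y = T y := fun y => rfl
  have hmap : Measure.map (⇑em) (volume : Measure (SymIdx n → ℝ)) =
      ENNReal.ofReal |(LinearMap.det T)⁻¹| • volume := by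
    have hfe : ⇑em = ⇑T := rfl
    rw [hfe]
    exact Measure.map_linearMap_addHaar_eq_smul_addHaar volume hTdet0
  set A := {x : SymIdx n → ℝ | (toSym x - h).PosDef ∧ (toSym x + h).PosDef} with hA
  set B := {y : SymIdx n → ℝ | (toSym y - h').PosDef ∧ (toSym y + h').PosDef} with hB
  have hAmeas : MeasurableSet A := EtaAux.measurableSet_domain h hh
  have hBmeas : MeasurableSet B := EtaAux.measurableSet_domain h' hh'
  have hpre : ⇑em ⁻¹' A = B := by
    ext y
    simp only [Set.mem_preimage, hA, hB, Set.mem_setOf_eq]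
    have hy : toSym (em y) = S⁻¹ * toSym y * (S⁻¹)ᵀ := EtaAux.toSym_Tl S⁻¹ y
    rw [hy, hconjsub (toSym y), hconjadd (toSym y),
      EtaAux.posDef_conj_iff hdetinv, EtaAux.posDef_conj_iff hdetinv]
  set r : ℝ := (S.det⁻¹) ^ 2 with hr
  have hrpos : 0 < r := by
    rw [hr]
    positivity
  have hdetconj : ∀ X : Matrix (Fin n) (Fin n) ℝ, (S⁻¹ * X * (S⁻¹)ᵀ).det = r * X.det := by
    intro X
    rw [Matrix.det_mul, Matrix.det_mul, Matrix.det_transpose, Matrix.det_nonsing_inv,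
      Ring.inverse_eq_inv, hr]
    ring
  have htr : ∀ u : Matrix (Fin n) (Fin n) ℝ,
      ((S⁻¹ * u * (S⁻¹)ᵀ) * (Sᵀ * g * S)).trace = (u * g).trace := by
    intro u
    have e1 : (S⁻¹ * u * (S⁻¹)ᵀ) * (Sᵀ * g * S) = S⁻¹ * u * ((S⁻¹)ᵀ * Sᵀ) * g * S := by
      noncomm_ring
    rw [e1, hTp', mul_one]
    rw [Matrix.trace_mul_comm]
    have e2 : S * (S⁻¹ * u * g) = S * S⁻¹ * (u * g) := by noncomm_ring
    rw [e2, hSS, one_mul]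
  set ρ : ℂ := ((n : ℂ) + 1) / 2 with hρ
  set f1 : (SymIdx n → ℝ) → ℂ := fun x =>
    Complex.exp (-(((toSym x * (Sᵀ * g * S)).trace : ℝ) : ℂ)) *
      (((toSym x + h).det : ℝ) : ℂ) ^ (α - ρ) *
      (((toSym x - h).det : ℝ) : ℂ) ^ (β - ρ) with hf1
  set f2 : (SymIdx n → ℝ) → ℂ := fun y =>
    Complex.exp (-(((toSym y * g).trace : ℝ) : ℂ)) *
      (((toSym y + h').det : ℝ) : ℂ) ^ (α - ρ) *
      (((toSym y - h').det : ℝ) : ℂ) ^ (β - ρ) with hf2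
  have lhs_eq : etaN n (Sᵀ * g * S) h α β = ∫ x in A, f1 x := rfl
  have rhs_eq : etaN n g h' α β = ∫ y in B, f2 y := rfl
  set C2 : ℂ := ((r : ℝ) : ℂ) ^ (α - ρ) * ((r : ℝ) : ℂ) ^ (β - ρ) with hC2
  -- pointwise identity on B
  have hpt : ∀ y ∈ B, f1 (em y) = C2 * f2 y := by
    intro y hy
    obtain ⟨hy1, hy2⟩ := hy
    have hys : toSym (em y) = S⁻¹ * toSym y * (S⁻¹)ᵀ := EtaAux.toSym_Tl S⁻¹ y
    have hda : (toSym (em y) + h).det = r * (toSym y + h').det := by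
      rw [hys, hconjadd (toSym y), hdetconj]
    have hdb : (toSym (em y) - h).det = r * (toSym y - h').det := by
      rw [hys, hconjsub (toSym y), hdetconj]
    have htra : (toSym (em y) * (Sᵀ * g * S)).trace = (toSym y * g).trace := by
      rw [hys]
      exact htr (toSym y)
    rw [hf1]
    simp only
    rw [htra, hda, hdb]
    rw [Complex.ofReal_mul, Complex.ofReal_mul,
      Complex.mul_cpow_ofReal_nonneg hrpos.le hy2.det_pos.le,
      Complex.mul_cpow_ofReal_nonneg hrpos.le hy1.det_pos.le]
    rw [hC2, hf2]
    simp only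
    ring
  -- change of variables
  have key2 : ∫ y, (A.indicator f1) (em y) =
      (ENNReal.ofReal |(LinearMap.det T)⁻¹|).toReal • ∫ x, (A.indicator f1) x := by
    rw [← MeasureTheory.integral_map_equiv em (A.indicator f1), hmap, integral_smul_measure]
  have key3 : ∫ y, (A.indicator f1) (em y) = ∫ y in B, f1 (em y) := by
    have : ∀ y, (A.indicator f1) (em y) = B.indicator (fun z => f1 (em z)) y := by
      intro y
      rw [← hpre]
      exact (Set.indicator_comp_right (⇑em) (s := A) (g := f1) (x := y)).symm
    rw [funext this, integral_indicator hBmeas]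
  have key4 : ∫ y in B, f1 (em y) = C2 * ∫ y in B, f2 y := by
    rw [setIntegral_congr_fun hBmeas hpt, integral_const_mul]
  have key5 : ∫ x, (A.indicator f1) x = ∫ x in A, f1 x := integral_indicator hAmeas
  -- the constant
  have hcabs : |(LinearMap.det T)⁻¹| = |S.det| ^ (n + 1) := by
    rw [hTdet, Matrix.det_nonsing_inv, Ring.inverse_eq_inv, ← inv_pow, inv_inv, abs_pow]
  have habs : (0 : ℝ) < |S.det| := abs_pos.2 hdet
  have hcpos : (0 : ℝ) < |S.det| ^ (n + 1) := pow_pos habs _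
  -- solve
  have main : (|S.det| ^ (n + 1) : ℝ) • (∫ x in A, f1 x) = C2 * ∫ y in B, f2 y := by
    rw [← key4, ← key3, key2, hcabs, ENNReal.toReal_ofReal hcpos.le, key5]
  rw [lhs_eq, rhs_eq]
  have main2 : (∫ x in A, f1 x) =
      ((((|S.det| ^ (n + 1) : ℝ))⁻¹ : ℝ) : ℂ) * (C2 * ∫ y in B, f2 y) := by
    rw [← main]
    rw [Complex.real_smul]
    rw [← mul_assoc, ← Complex.ofReal_mul, inv_mul_cancel₀ hcpos.ne', Complex.ofReal_one, one_mul]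
  rw [main2]
  rw [← mul_assoc]
  congr 1
  -- constant identity
  have hrd : r = (|S.det| ^ 2)⁻¹ := by
    rw [hr, inv_pow, ← sq_abs]
  rw [hC2, hrd]
  have e1 : ((((|S.det| ^ (n + 1))⁻¹ : ℝ)) : ℂ) =
      Complex.exp ((Real.log ((|S.det| ^ (n + 1))⁻¹) : ℂ)) := by
    exact EtaAux.ofReal_pos_eq_exp _ (by positivity)
  have e2 : ∀ c : ℂ, (((((|S.det| ^ 2)⁻¹ : ℝ)) : ℂ)) ^ c =
      Complex.exp ((Real.log ((|S.det| ^ 2)⁻¹) : ℂ) * c) := by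
    intro c
    exact EtaAux.cpow_pos_eq_exp _ (by positivity) c
  have e3 : ((|S.det| : ℝ) : ℂ) ^ (2 * (ρ - α - β)) =
      Complex.exp ((Real.log |S.det| : ℂ) * (2 * (ρ - α - β))) :=
    EtaAux.cpow_pos_eq_exp _ habs _
  rw [e1, e2, e2, e3, ← Complex.exp_add, ← Complex.exp_add]
  congr 1
  rw [Real.log_inv, Real.log_inv, Real.log_pow, Real.log_pow]
  push_cast
  ring
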